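/- Let G be a group, A a finite alphabet, M ⊆ G finite, S = A^(A^M). Suppose s ∈ S^G is asymptotically constant and σ_s is stably injective. Then there exist a finite subset N ⊆ G and an asymptotically constant configuration t ∈ T^G, T = A^(A^N), such that σ_t ∘ σ_s = Id on A^G. -/

import Mathlib

open scoped Pointwise

/-- The NUCA with memory `M` and configuration of local defining maps `s`. -/
def nuca {G A : Type*} [Group G] (M : Set G) (s : G → (M → A) → A)
    (x : G → A) : G → A :=
  fun g => s g fun m => x (g * (m : G))

/-- `Σ(s)`: orbit closure of `s` in the prodiscrete topology. -/
def orbitClosure {G S : Type*} [Group G] (s : G → S) : Set (G → S) :=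
  @closure _ (@Pi.topologicalSpace G (fun _ => S) (fun _ => ⊥))
    {p | ∃ g : G, p = fun h => s (g⁻¹ * h)}

/-- A configuration is asymptotically constant if it agrees with a constant
configuration outside a finite set. -/
def AsympConst {G S : Type*} (s : G → S) : Prop :=
  ∃ c : S, {g : G | s g ≠ c}.Finite

/-- A stably injective, asymptotically constant NUCA with finite memory over a
finite alphabet admits an asymptotically constant left inverse NUCA with
finite memory. -/
theorem stmt5 {G A : Type*} [Group G] [Finite A]
    (M : Set G) (hM : M.Finite) (s : G → (M → A) → A)
    (hconst : AsympConst s)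
    (hinj : ∀ p ∈ orbitClosure s, Function.Injective (nuca M p)) :
    ∃ N : Set G, N.Finite ∧ ∃ t : G → (N → A) → A,
      AsympConst t ∧ ∀ x, nuca N t (nuca M s x) = x := by
  classical
  rcases isEmpty_or_nonempty A with hA | hA
  · -- degenerate case : empty alphabet
    refine ⟨{1}, Set.finite_singleton 1, ?_⟩
    haveI : IsEmpty ((({1} : Set G) → A)) :=
      ⟨fun f => isEmptyElim (f ⟨1, rfl⟩)⟩
    haveI : IsEmpty (G → A) := ⟨fun f => isEmptyElim (f 1)⟩
    refine ⟨fun _ u => isEmptyElim u, ⟨fun u => isEmptyElim u, ?_⟩, fun x => isEmptyElim x⟩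
    convert Set.finite_empty using 2
    ext g
    simp only [Set.mem_setOf_eq, Set.mem_empty_iff_false, iff_false, not_not]
  -- main case
  inhabit A
  haveI : Finite ↥M := hM.to_subtype
  letI tA : TopologicalSpace A := ⊥
  haveI : DiscreteTopology A := ⟨rfl⟩
  letI tS : TopologicalSpace ((↥M → A) → A) := ⊥
  haveI : DiscreteTopology ((↥M → A) → A) := ⟨rfl⟩
  -- Key uniform injectivity lemma via compactness
  obtain ⟨E, hE⟩ : ∃ E : Finset G, ∀ p ∈ orbitClosure s, ∀ x y : G → A,
      (∀ e ∈ E, nuca M p x e = nuca M p y e) → x 1 = y 1 := by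
    by_contra hc
    push_neg at hc
    set X := (G → ((↥M → A) → A)) × (G → A) × (G → A) with hX
    have keyc : ∀ (e : G) (f : X → G → A), Continuous f →
        Continuous fun z : X => nuca M z.1 (f z) e := by
      intro e f hf
      have h1 : Continuous fun z : X => z.1 e := (continuous_apply e).comp continuous_fst
      have h2 : Continuous fun z : X => (fun m : ↥M => f z (e * (m : G))) :=
        continuous_pi fun m => (continuous_apply _).comp hf
      exact (continuous_of_discreteTopology
        (f := fun q : ((↥M → A) → A) × (↥M → A) => q.1 q.2)).comp (h1.prodMk h2)
    let C : Finset G → Set X := fun E =>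
      (Prod.fst ⁻¹' orbitClosure s) ∩
        ((⋂ e ∈ E, {z : X | nuca M z.1 z.2.1 e = nuca M z.1 z.2.2 e}) ∩
          {z : X | z.2.1 1 ≠ z.2.2 1})
    have hCclosed : ∀ E, IsClosed (C E) := by
      intro E
      have ho : IsClosed (orbitClosure s) := isClosed_closure
      refine (ho.preimage continuous_fst).inter (IsClosed.inter ?_ ?_)
      · refine isClosed_biInter fun e _ => isClosed_eq ?_ ?_
        · exact keyc e _ (continuous_fst.comp continuous_snd)
        · exact keyc e _ (continuous_snd.comp continuous_snd)
      · have hc2 : Continuous fun z : X => (z.2.1 1, z.2.2 1) :=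
          ((continuous_apply 1).comp (continuous_fst.comp continuous_snd)).prodMk
            ((continuous_apply 1).comp (continuous_snd.comp continuous_snd))
        exact IsClosed.preimage hc2 (isClosed_discrete {p : A × A | p.1 ≠ p.2})
    have hCne : ∀ E, (C E).Nonempty := by
      intro E
      obtain ⟨p, hp, x, y, heq, hne⟩ := hc E
      refine ⟨(p, x, y), hp, ?_, hne⟩
      rw [Set.mem_iInter₂]
      exact heq
    have hmono : ∀ {E F : Finset G}, E ⊆ F → C F ⊆ C E := by
      intro E F hEF z hz
      refine ⟨hz.1, ?_, hz.2.2⟩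
      have h2 := hz.2.1
      rw [Set.mem_iInter₂] at h2 ⊢
      exact fun e he => h2 e (hEF he)
    have hdir : Directed (· ⊇ ·) C := fun E F =>
      ⟨E ∪ F, hmono Finset.subset_union_left, hmono Finset.subset_union_right⟩
    obtain ⟨z, hz⟩ := IsCompact.nonempty_iInter_of_directed_nonempty_isCompact_isClosed
      C hdir hCne (fun E => (hCclosed E).isCompact) hCclosed
    have hz' : ∀ E, z ∈ C E := Set.mem_iInter.1 hz
    have hmem : z.1 ∈ orbitClosure s := (hz' ∅).1
    have hne : z.2.1 1 ≠ z.2.2 1 := (hz' ∅).2.2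
    have hall : nuca M z.1 z.2.1 = nuca M z.1 z.2.2 := by
      funext g
      have h2 := (hz' {g}).2.1
      rw [Set.mem_iInter₂] at h2
      exact h2 g (Finset.mem_singleton_self g)
    exact hne (congrFun (hinj z.1 hmem hall) 1)
  -- Construction of the inverse
  set N : Set G := (E : Set G) with hN
  let Ψ : (↥N → ((↥M → A) → A)) → (↥N → A) → A := fun q u =>
    if h : ∃ x' : G → A, ∀ e : ↥N, q e (fun m => x' ((e : G) * (m : G))) = u e
    then h.choose 1 else default
  let t : G → (↥N → A) → A := fun g u => Ψ (fun e => s (g * (e : G))) u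
  refine ⟨N, E.finite_toSet, t, ?_, ?_⟩
  · -- asymptotically constant
    obtain ⟨cs, hcs⟩ := hconst
    refine ⟨Ψ (fun _ => cs), Set.Finite.subset (hcs.mul (E.finite_toSet.inv)) ?_⟩
    intro g hg
    simp only [Set.mem_setOf_eq] at hg
    by_contra hgm
    apply hg
    have hloc : ∀ e : ↥N, s (g * (e : G)) = cs := by
      intro e
      by_contra hse
      apply hgm
      have h1 : g * (e : G) ∈ {g : G | s g ≠ cs} := hse
      have h2 : ((e : G))⁻¹ ∈ ((E : Set G))⁻¹ := by
        rw [Set.mem_inv, inv_inv]; exact e.2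
      have := Set.mul_mem_mul h1 h2
      rwa [mul_inv_cancel_right] at this
    have : (fun e : ↥N => s (g * (e : G))) = fun _ => cs := funext hloc
    show Ψ (fun e => s (g * (e : G))) = Ψ (fun _ => cs)
    rw [this]
  · -- left inverse
    intro x
    funext g
    have hp : (fun h => s (g * h)) ∈ orbitClosure s := by
      have hmem : (fun h => s (g * h)) ∈
          {p : G → (↥M → A) → A | ∃ g' : G, p = fun h => s (g'⁻¹ * h)} :=
        ⟨g⁻¹, funext fun h => by rw [inv_inv]⟩
      exact subset_closure hmem
    set p : G → (↥M → A) → A := fun h => s (g * h) with hpdef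
    set xg : G → A := fun h => x (g * h) with hxg
    show Ψ (fun e => s (g * (e : G))) (fun n : ↥N => nuca M s x (g * (n : G))) = x g
    have hu : ∀ n : ↥N, nuca M s x (g * (n : G)) = nuca M p xg (n : G) := by
      intro n
      show s (g * (n : G)) (fun m => x (g * (n : G) * (m : G))) =
        s (g * (n : G)) (fun m => x (g * ((n : G) * (m : G))))
      exact congrArg _ (funext fun m => by rw [mul_assoc])
    have hq : (fun e : ↥N => s (g * (e : G))) = fun e : ↥N => p (e : G) := rfl
    rw [funext hu, hq]
    have hcond : ∃ x' : G → A,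
        ∀ e : ↥N, p (e : G) (fun m => x' ((e : G) * (m : G))) = nuca M p xg (e : G) :=
      ⟨xg, fun e => rfl⟩
    show (if h : ∃ x' : G → A,
        ∀ e : ↥N, p (e : G) (fun m => x' ((e : G) * (m : G))) = nuca M p xg (e : G)
        then h.choose 1 else default) = x g
    rw [dif_pos hcond]
    have hspec := hcond.choose_spec
    have harg : ∀ e ∈ E, nuca M p hcond.choose e = nuca M p xg e := by
      intro e he
      exact hspec ⟨e, he⟩
    have := hE p hp hcond.choose xg harg
    rw [this, hxg]
    show x (g * 1) = x g
    rw [mul_one]
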